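/- The backward Euler method with explicit bulk boundary flux applied to the one-way coupled 1D diffusion equation is stable (all normal-mode amplification factors A with admissible decaying spatial modes satisfy |A| ≤ 1) if and only if β ≤ 1 + √(1 + 2d), where β is the bulk Courant number and d the diffusion Courant number. -/

import Mathlib

theorem myReal (β d : ℝ) (hβ : 0 < β) (hd : 0 < d) (w : ℂ)
    (hq : ((β:ℂ)-1)*w^2 - ((β:ℂ)+d)*w - β*d = 0) : w.im = 0 := by
  have hre := congrArg Complex.re hq
  have him := congrArg Complex.im hq
  simp [Complex.add_im, Complex.mul_im, Complex.mul_re, pow_two] at hre him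
  set x := w.re; set y := w.im
  by_contra hy
  have him' : (β-1)*(2*x) = β + d := by
    have : y * ((β-1)*(2*x) - (β+d)) = 0 := by ring_nf; ring_nf at him; linarith [him]
    rcases mul_eq_zero.mp this with h | h
    · exact absurd h hy
    · linarith
  nlinarith [sq_nonneg ((β-1)*y), sq_nonneg (β-d), mul_pos (mul_pos hβ hβ) hd, sq_nonneg y, mul_pos hβ hd]

theorem keyPos (β d z : ℝ) (hβ : 0 < β) (hd : 0 < d)
    (hf : (β-1)*z^2 - (β+d)*z - β*d = 0)
    (hs : β ≤ 1 + Real.sqrt (1+2*d))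
    (hz : 0 < z) : β ≤ z := by
  have hsnn : 0 ≤ Real.sqrt (1+2*d) := Real.sqrt_nonneg _
  have hs2 : Real.sqrt (1+2*d)^2 = 1+2*d := Real.sq_sqrt (by nlinarith)
  have hb1 : 1 < β := by nlinarith
  have h2 : (β-1)*z > β+d := by nlinarith [mul_pos hβ hd]
  have hfb : β^2 - 2*β - 2*d ≤ 0 := by
    nlinarith [mul_nonneg (sub_nonneg.mpr hs) (show 0 ≤ β - 1 + Real.sqrt (1+2*d) by nlinarith)]
  by_contra h
  push_neg at h
  nlinarith [mul_pos (show 0 < β - z by linarith) (show 0 < (β-1)*(z+β) - (β+d) by nlinarith)]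

theorem keyNeg (β d z : ℝ) (hβ : 0 < β) (hd : 0 < d)
    (hf : (β-1)*z^2 - (β+d)*z - β*d = 0)
    (hz : z < -(2*d)) : z ≤ -β := by
  by_contra h
  push_neg at h
  have hb1 : β < 1 := by nlinarith
  nlinarith [mul_pos (show (0:ℝ) < z + β by linarith) (show (0:ℝ) < -(2*d) - z by linarith), mul_pos hβ hd, mul_pos hd hd]


/-- Stability of backward Euler with explicit bulk boundary flux for the one-way
coupled 1D diffusion model: all normal-mode amplification factors `A` with
admissible decaying spatial modes `κ` (satisfying the interior relation
`1 - A⁻¹ = d (κ - 2 + κ⁻¹)` and boundary relation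
`1 - A⁻¹ = -β A⁻¹ - d (1 - κ⁻¹)`, with `|κ| > 1` for far-field decay)
satisfy `|A| ≤ 1` iff `β ≤ 1 + √(1 + 2d)`. -/
theorem stmt10 (β d : ℝ) (hβ : 0 < β) (hd : 0 < d) :
    (∀ A κ : ℂ, A ≠ 0 → κ ≠ 0 → 1 < ‖κ‖ →
        1 - A⁻¹ = (d : ℂ) * (κ - 2 + κ⁻¹) →
        1 - A⁻¹ = -(β : ℂ) * A⁻¹ - (d : ℂ) * (1 - κ⁻¹) →
        ‖A‖ ≤ 1)
    ↔ β ≤ 1 + Real.sqrt (1 + 2 * d) := by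
  constructor
  · intro hL
    by_contra hc
    push_neg at hc
    have hs1 : 1 < Real.sqrt (1+2*d) := by
      have := Real.sqrt_lt_sqrt (le_refl 0 |>.trans (by norm_num : (0:ℝ) ≤ 1)) (show (1:ℝ) < 1+2*d by linarith)
      simpa using this
    have hs1' : 1 + 2*d < Real.sqrt (1+2*d) * Real.sqrt (1+2*d) + 2 * Real.sqrt (1+2*d) + 1 := by
      nlinarith [Real.mul_self_sqrt (show (0:ℝ) ≤ 1+2*d by linarith)]
    have hb2 : 2 < β := by linarith [hc, hs1]
    have hβ1 : (1:ℝ) < β - 1 := by linarith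
    set r : ℝ := Real.sqrt ((β-d)^2 + 4*β^2*d) with hrdef
    have hrnn : 0 ≤ r := Real.sqrt_nonneg _
    have hr2 : r^2 = (β-d)^2 + 4*β^2*d := Real.sq_sqrt (by positivity)
    obtain ⟨z, hz0, hfz, hzβ⟩ : ∃ z : ℝ, 0 < z ∧ (β-1)*z^2 - (β+d)*z - β*d = 0 ∧ z < β := by
      refine ⟨((β+d)+r)/(2*(β-1)), by positivity, ?_, ?_⟩
      · field_simp
        nlinarith [hr2]
      · have hM : 0 < 2*β^2 - 3*β - d := by
          have hsq : (β-1)^2 > 1 + 2*d := by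
            nlinarith [Real.mul_self_sqrt (show (0:ℝ) ≤ 1+2*d by linarith)]
          nlinarith
        have hrM : r < 2*β^2 - 3*β - d := by
          have hsq : (β-1)^2 > 1 + 2*d := by
            nlinarith [Real.mul_self_sqrt (show (0:ℝ) ≤ 1+2*d by linarith)]
          nlinarith [hr2, sq_nonneg (β - d), mul_pos (mul_pos hβ hβ) hd]
        rw [div_lt_iff₀ (by linarith)]
        linarith
    have hdz : 0 < d + z := by linarith
    -- instantiate
    have key := hL ((-(β/z) : ℝ) : ℂ) (((d+z)/d : ℝ) : ℂ)
      (Complex.ofReal_ne_zero.mpr (neg_ne_zero.mpr (div_pos hβ hz0).ne'))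
      (Complex.ofReal_ne_zero.mpr (div_pos hdz hd).ne')
      (by
        rw [Complex.norm_real, Real.norm_eq_abs, abs_of_pos (div_pos hdz hd), lt_div_iff₀ hd]
        linarith)
      (by
        rw [← Complex.ofReal_inv, ← Complex.ofReal_inv]
        have hre : (1 - (-(β/z))⁻¹ : ℝ) = d * ((d+z)/d - 2 + ((d+z)/d)⁻¹) := by
          rw [inv_div, inv_neg, inv_div]
          field_simp
          linear_combination -hfz
        exact_mod_cast congrArg (Complex.ofReal) hre)
      (by
        rw [← Complex.ofReal_inv, ← Complex.ofReal_inv]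
        have hre : (1 - (-(β/z))⁻¹ : ℝ) = -β * (-(β/z))⁻¹ - d * (1 - ((d+z)/d)⁻¹) := by
          rw [inv_div, inv_neg, inv_div]
          field_simp
          linear_combination -hfz
        exact_mod_cast congrArg (Complex.ofReal) hre)
    rw [Complex.norm_real, Real.norm_eq_abs, abs_of_neg (neg_lt_zero.mpr (div_pos hβ hz0)), neg_neg] at key
    rw [div_le_one hz0] at key
    linarith
  · intro hs A κ hA hκ habs h1 h2
    have hκi : κ * κ⁻¹ = 1 := mul_inv_cancel₀ hκ
    have hz : (β:ℂ) * A⁻¹ = -((d:ℂ)*(κ-1)) := by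
      linear_combination h2 - h1
    have hquad : ((β:ℂ)-1)*((d:ℂ)*(κ-1))^2 - ((β:ℂ)+(d:ℂ))*((d:ℂ)*(κ-1)) - (β:ℂ)*(d:ℂ) = 0 := by
      linear_combination (-(β:ℂ)*d*κ)*h1 + (-(d:ℂ)*κ)*hz + (-(β:ℂ)*d*d)*hκi
    set w : ℂ := (d:ℂ)*(κ-1) with hw
    have him : w.im = 0 := myReal β d hβ hd w hquad
    set x : ℝ := w.re with hx
    have hwx : w = (x:ℝ) := Complex.ext rfl him
    -- real quadratic
    have hqr : (β-1)*x^2 - (β+d)*x - β*d = 0 := by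
      rw [hwx] at hquad
      exact_mod_cast hquad
    -- κ as a real
    have hκx : κ = (((d+x)/d : ℝ) : ℂ) := by
      have : (d:ℂ) ≠ 0 := by exact_mod_cast hd.ne'
      push_cast
      field_simp
      linear_combination hwx
    have habs' : 1 < |(d+x)/d| := by
      rwa [hκx, Complex.norm_real, Real.norm_eq_abs] at habs
    have hadm : 0 < x ∨ x < -(2*d) := by
      have hu : d * ((d+x)/d) = d + x := by field_simp
      rcases lt_abs.mp habs' with h | h
      · left; nlinarith
      · right; nlinarith
    have hxabs : β ≤ |x| := by
      rcases hadm with h | h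
      · rw [abs_of_pos h]; exact keyPos β d x hβ hd hqr hs h
      · rw [abs_of_neg (by linarith)]; linarith [keyNeg β d x hβ hd hqr h]
    have hβ0 : (β:ℂ) ≠ 0 := by exact_mod_cast hβ.ne'
    have hAinv : A⁻¹ = ((-(x/β) : ℝ) : ℂ) := by
      have h := hz
      rw [hwx] at h
      push_cast
      field_simp
      have hAi : A * A⁻¹ = 1 := mul_inv_cancel₀ hA
      linear_combination A*h - (β:ℂ)*hAi
    have habsAinv : 1 ≤ ‖A‖⁻¹ := by
      rw [← norm_inv, hAinv, Complex.norm_real, Real.norm_eq_abs, abs_neg, abs_div,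
        abs_of_pos hβ]
      rw [le_div_iff₀ hβ]
      simpa using hxabs
    have hApos : 0 < ‖A‖ := norm_pos_iff.mpr hA
    exact (one_le_inv_iff₀.mp habsAinv).2
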